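/- arXiv:1002.0326 — 4 statements merged into one kernel-verified Lean document; each statement's English description precedes it below -/
import Mathlib

section
/- Let T>0, let u:[0,T)×ℝ→ℝ be bounded and upper semicontinuous, let v:[0,T)×ℝ→ℝ be bounded and lower semicontinuous, and let u₀:ℝ→ℝ be Lipschitz continuous with u(0,·) ≤ u₀ ≤ v(0,·). Assume M := sup{u(t,x)−v(t,x) : 0<t<T, x∈ℝ} > 0. Then there exist ε₀, α₀, η₀ > 0, depending only on M, T, sup|u|, sup|v| and the Lipschitz constant of u₀, such that for every K ≥ 0, ε ∈ (0,ε₀], α ∈ (0,α₀], η ∈ (0,η₀]: the supremum M_{ε,α} := sup{ u(t,x) − v(t,y) − e^{Kt}·(x−y)²/(2ε) − η/(T−t) − α·x²/2 : 0<t<T, x,y∈ℝ } is attained at some point (t,x,y) with t>0, and moreover M_{ε,α} > M/3, |x−y| ≤ C₀·√ε and α·|x| ≤ C₀·√α, where C₀ is a constant depending only on sup|u| and sup|v|. -/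
open Set Real Filter

set_option maxHeartbeats 1000000

private lemma usc_comp_cont {α β : Type*} [TopologicalSpace α] [TopologicalSpace β]
    {f : α → ℝ} {g : β → α} {s : Set β} {t : Set α}
    (hf : UpperSemicontinuousOn f t) (hg : Continuous g) (hst : Set.MapsTo g s t) :
    UpperSemicontinuousOn (fun x => f (g x)) s := by
  intro x hx y hy
  have h1 : Filter.Tendsto g (nhdsWithin x s) (nhdsWithin (g x) t) :=
    hg.continuousWithinAt.tendsto_nhdsWithin hst
  exact h1.eventually (hf (g x) (hst hx) y hy)

private lemma lsc_neg_on {α : Type*} [TopologicalSpace α] {f : α → ℝ} {s : Set α}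
    (hf : LowerSemicontinuousOn f s) : UpperSemicontinuousOn (fun x => -f x) s := by
  intro x hx y hy
  have h2 : -y < f x := by simpa using neg_lt_neg hy
  filter_upwards [hf x hx (-y) h2] with z hz
  simpa using neg_lt_neg hz

private lemma usc_exists_max {γ : Type*} [TopologicalSpace γ] {f : γ → ℝ} {s : Set γ}
    (hs : IsCompact s) (hne : s.Nonempty) (hf : UpperSemicontinuousOn f s) :
    ∃ x ∈ s, ∀ y ∈ s, f y ≤ f x := by
  by_contra h
  push_neg at h
  choose g hg1 hg2 using h
  have hU : ∀ x (hx : x ∈ s), ∃ V : Set γ, IsOpen V ∧ x ∈ V ∧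
      ∀ z ∈ V, z ∈ s → f z < f (g x hx) := by
    intro x hx
    have h2 := hf x hx (f (g x hx)) (hg2 x hx)
    rw [eventually_nhdsWithin_iff] at h2
    rcases eventually_nhds_iff.1 h2 with ⟨V, hV1, hV2, hV3⟩
    exact ⟨V, hV2, hV3, fun z hz hzs => hV1 z hz hzs⟩
  choose V hVopen hxV hVlt using hU
  obtain ⟨t, hcover⟩ := hs.elim_nhds_subcover' V (fun x hx => (hVopen x hx).mem_nhds (hxV x hx))
  have htne : t.Nonempty := by
    obtain ⟨x0, hx0⟩ := hne
    obtain ⟨i, hi, -⟩ := Set.mem_iUnion₂.1 (hcover hx0)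
    exact ⟨i, hi⟩
  obtain ⟨j, hjt, hjmax⟩ := t.exists_max_image (fun i => f (g i.1 i.2)) htne
  have hzs : g j.1 j.2 ∈ s := hg1 j.1 j.2
  obtain ⟨i, hit, hiz⟩ := Set.mem_iUnion₂.1 (hcover hzs)
  have h1 : f (g j.1 j.2) < f (g i.1 i.2) := hVlt i.1 i.2 _ hiz hzs
  have h2 : f (g i.1 i.2) ≤ f (g j.1 j.2) := hjmax i hit
  exact absurd (h1.trans_le h2) (lt_irrefl _)

private noncomputable def Phi (u v : ℝ → ℝ → ℝ) (T K ε η α : ℝ) (t x y : ℝ) : ℝ :=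
  u t x - v t y - Real.exp (K * t) * (x - y) ^ 2 / (2 * ε) - η / (T - t) - α * x ^ 2 / 2

private lemma Phi_def (u v : ℝ → ℝ → ℝ) (T K ε η α t x y : ℝ) :
    Phi u v T K ε η α t x y =
      u t x - v t y - Real.exp (K * t) * (x - y) ^ 2 / (2 * ε) - η / (T - t) -
        α * x ^ 2 / 2 := rfl

/-- Lemma 3.2: penalization.
If `u` is bounded usc, `v` bounded lsc on `[0,T) × ℝ`, `u(0,·) ≤ u₀ ≤ v(0,·)` with `u₀`
Lipschitz, and `M = sup (u - v) > 0`, then for all small `ε, α, η > 0` and any `K ≥ 0`, the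
penalized supremum `M_{ε,α}` is attained at a point `(t,x,y)` with `t > 0`, its value exceeds
`M/3`, and `|x-y| ≤ C₀ √ε`, `α |x| ≤ C₀ √α`. -/
theorem penalization (T : ℝ) (hT : 0 < T) (u v : ℝ → ℝ → ℝ) (u0 : ℝ → ℝ)
    (husc : UpperSemicontinuousOn (fun p : ℝ × ℝ => u p.1 p.2) (Set.Ico 0 T ×ˢ Set.univ))
    (hlsc : LowerSemicontinuousOn (fun p : ℝ × ℝ => v p.1 p.2) (Set.Ico 0 T ×ˢ Set.univ))
    (hub : ∃ Mu : ℝ, ∀ t x : ℝ, 0 ≤ t → t < T → |u t x| ≤ Mu)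
    (hvb : ∃ Mv : ℝ, ∀ t x : ℝ, 0 ≤ t → t < T → |v t x| ≤ Mv)
    (hlip : ∃ L : NNReal, LipschitzWith L u0)
    (hord : ∀ x : ℝ, u 0 x ≤ u0 x ∧ u0 x ≤ v 0 x)
    (M : ℝ) (hM : IsLUB {m : ℝ | ∃ t x : ℝ, 0 < t ∧ t < T ∧ m = u t x - v t x} M)
    (hMpos : 0 < M) :
    ∃ ε0 : ℝ, 0 < ε0 ∧ ∃ α0 : ℝ, 0 < α0 ∧ ∃ η0 : ℝ, 0 < η0 ∧ ∃ C0 : ℝ, 0 < C0 ∧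
      ∀ K ε α η : ℝ, 0 ≤ K → 0 < ε → ε ≤ ε0 → 0 < α → α ≤ α0 → 0 < η → η ≤ η0 →
        ∃ t x y : ℝ, 0 < t ∧ t < T ∧
          (∀ t' x' y' : ℝ, 0 < t' → t' < T →
            u t' x' - v t' y' - Real.exp (K * t') * (x' - y') ^ 2 / (2 * ε) - η / (T - t') -
                α * x' ^ 2 / 2 ≤
              u t x - v t y - Real.exp (K * t) * (x - y) ^ 2 / (2 * ε) - η / (T - t) -
                α * x ^ 2 / 2) ∧
          M / 3 < u t x - v t y - Real.exp (K * t) * (x - y) ^ 2 / (2 * ε) - η / (T - t) -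
            α * x ^ 2 / 2 ∧
          |x - y| ≤ C0 * Real.sqrt ε ∧ α * |x| ≤ C0 * Real.sqrt α := by
  obtain ⟨Mu, hub⟩ := hub
  obtain ⟨Mv, hvb⟩ := hvb
  obtain ⟨L, hlip⟩ := hlip
  -- a point where u - v > 2M/3
  obtain ⟨m, hmS, hm⟩ :
      ∃ m ∈ {m : ℝ | ∃ t x : ℝ, 0 < t ∧ t < T ∧ m = u t x - v t x}, 2 * M / 3 < m := by
    by_contra h
    push_neg at h
    have : M ≤ 2 * M / 3 := hM.2 fun m hm => h m hm
    linarith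
  obtain ⟨tb, xb, htb0, htbT, hmeq⟩ := hmS
  rw [hmeq] at hm
  have hTtb : 0 < T - tb := by linarith
  set C := Mu + Mv with hCdef
  have hCge : u tb xb - v tb xb ≤ C := by
    have h1 := abs_le.1 (hub tb xb htb0.le htbT)
    have h2 := abs_le.1 (hvb tb xb htb0.le htbT)
    rw [hCdef]; linarith [h1.2, h2.1]
  have hCpos : 0 < C := by linarith
  refine ⟨M / (6 * ((L : ℝ) ^ 2 + 1)), div_pos hMpos (by positivity),
    M / (3 * (xb ^ 2 + 1)), div_pos hMpos (by positivity),
    M * (T - tb) / 6, div_pos (mul_pos hMpos hTtb) (by norm_num),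
    Real.sqrt (2 * C) + 1, by positivity, ?_⟩
  intro K ε α η hK hε hε0 hα hα0 hη hη0
  -- small constants consequences
  have hLε : ε * (L : ℝ) ^ 2 / 2 < M / 3 := by
    have h := (le_div_iff₀ (by positivity : (0:ℝ) < 6 * ((L : ℝ) ^ 2 + 1))).1 hε0
    nlinarith [hε.le, sq_nonneg (L : ℝ)]
  have hα2 : α * xb ^ 2 / 2 ≤ M / 6 := by
    have h := (le_div_iff₀ (by positivity : (0:ℝ) < 3 * (xb ^ 2 + 1))).1 hα0
    nlinarith [hα.le, sq_nonneg xb]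
  have hη2 : η / (T - tb) ≤ M / 6 := by
    rw [div_le_iff₀ hTtb]
    nlinarith [hη0]
  -- value at the reference point
  have hc : M / 3 < Phi u v T K ε η α tb xb xb := by
    rw [Phi_def]
    have e0 : Real.exp (K * tb) * (xb - xb) ^ 2 / (2 * ε) = 0 := by simp
    rw [e0]
    linarith
  -- a priori bounds on superlevel set
  have hbound : ∀ t x y : ℝ, 0 ≤ t → t < T → M / 3 < Phi u v T K ε η α t x y →
      t ≤ T - η / C ∧ x ^ 2 ≤ 2 * C / α ∧ (x - y) ^ 2 ≤ 2 * ε * C := by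
    intro t x y h0 hTt hP
    have hP' : M / 3 < u t x - v t y - Real.exp (K * t) * (x - y) ^ 2 / (2 * ε) - η / (T - t) -
        α * x ^ 2 / 2 := hP
    have huv : u t x - v t y ≤ C := by
      have h1 := abs_le.1 (hub t x h0 hTt)
      have h2 := abs_le.1 (hvb t y h0 hTt)
      rw [hCdef]; linarith [h1.2, h2.1]
    have hTt' : 0 < T - t := by linarith
    have hexp : (1 : ℝ) ≤ Real.exp (K * t) := Real.one_le_exp (mul_nonneg hK h0)
    have hq : 0 ≤ (x - y) ^ 2 / (2 * ε) := by positivity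
    have hP1 : (x - y) ^ 2 / (2 * ε) ≤ Real.exp (K * t) * (x - y) ^ 2 / (2 * ε) := by
      rw [mul_div_assoc]
      exact le_mul_of_one_le_left hq hexp
    have hP2 : 0 < η / (T - t) := div_pos hη hTt'
    have hP3 : 0 ≤ α * x ^ 2 / 2 := by positivity
    have key2 : η / (T - t) ≤ C := by linarith
    have key3 : α * x ^ 2 / 2 ≤ C := by linarith
    have key4 : (x - y) ^ 2 / (2 * ε) ≤ C := by linarith
    refine ⟨?_, ?_, ?_⟩
    · have h1 : η ≤ C * (T - t) := (div_le_iff₀ hTt').1 key2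
      have h2 : η / C ≤ T - t := (div_le_iff₀ hCpos).2 (by linarith [mul_comm C (T - t)])
      linarith
    · rw [le_div_iff₀ hα]
      linarith [mul_comm (x ^ 2) α]
    · rw [div_le_iff₀ (by positivity : (0:ℝ) < 2 * ε)] at key4
      linarith [mul_comm C (2 * ε)]
  set t1 := T - η / C with ht1def
  have ht1T : t1 < T := by
    have : 0 < η / C := div_pos hη hCpos
    rw [ht1def]; linarith
  set R := Real.sqrt (2 * C / α) + Real.sqrt (2 * ε * C) with hRdef
  set Kc : Set (ℝ × ℝ × ℝ) := Icc 0 t1 ×ˢ (Icc (-R) R ×ˢ Icc (-R) R) with hKcdef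
  have hmem : ∀ t x y : ℝ, 0 ≤ t → t < T → M / 3 < Phi u v T K ε η α t x y →
      (t, x, y) ∈ Kc := by
    intro t x y h0 hTt hP
    obtain ⟨hb1, hb2, hb3⟩ := hbound t x y h0 hTt hP
    have hxabs : |x| ≤ Real.sqrt (2 * C / α) := by
      rw [← Real.sqrt_sq_eq_abs]; exact Real.sqrt_le_sqrt hb2
    have hxyabs : |x - y| ≤ Real.sqrt (2 * ε * C) := by
      rw [← Real.sqrt_sq_eq_abs]; exact Real.sqrt_le_sqrt hb3
    have hyabs : |y| ≤ R := by
      have h3 : |y| - |x| ≤ |y - x| := abs_sub_abs_le_abs_sub y x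
      have h4 : |y - x| = |x - y| := abs_sub_comm y x
      rw [hRdef]; linarith
    have hxR : |x| ≤ R := by
      rw [hRdef]; linarith [Real.sqrt_nonneg (2 * ε * C)]
    exact ⟨⟨h0, hb1⟩, abs_le.1 hxR, abs_le.1 hyabs⟩
  have hKcomp : IsCompact Kc := (isCompact_Icc.prod (isCompact_Icc.prod isCompact_Icc))
  have hpbar : ((tb, xb, xb) : ℝ × ℝ × ℝ) ∈ Kc := hmem tb xb xb htb0.le htbT hc
  -- the penalized functional as sum of usc and continuous parts
  set g : ℝ × ℝ × ℝ → ℝ := fun p =>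
    u p.1 p.2.1 + -(v p.1 p.2.2) +
      (-(Real.exp (K * p.1) * (p.2.1 - p.2.2) ^ 2 / (2 * ε)) - η / (T - p.1) -
        α * p.2.1 ^ 2 / 2) with hgdef
  have hgeq : ∀ p : ℝ × ℝ × ℝ, g p = Phi u v T K ε η α p.1 p.2.1 p.2.2 := by
    intro p
    rw [hgdef, Phi_def]
    ring
  have hmaps1 : Set.MapsTo (fun p : ℝ × ℝ × ℝ => (p.1, p.2.1)) Kc (Set.Ico 0 T ×ˢ Set.univ) := by
    intro p hp
    exact ⟨⟨hp.1.1, lt_of_le_of_lt hp.1.2 ht1T⟩, Set.mem_univ _⟩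
  have hmaps2 : Set.MapsTo (fun p : ℝ × ℝ × ℝ => (p.1, p.2.2)) Kc (Set.Ico 0 T ×ˢ Set.univ) := by
    intro p hp
    exact ⟨⟨hp.1.1, lt_of_le_of_lt hp.1.2 ht1T⟩, Set.mem_univ _⟩
  have huscK : UpperSemicontinuousOn g Kc := by
    rw [hgdef]
    apply UpperSemicontinuousOn.add
    · apply UpperSemicontinuousOn.add
      · exact usc_comp_cont husc (continuous_fst.prodMk continuous_snd.fst) hmaps1
      · exact usc_comp_cont (f := fun q : ℝ × ℝ => -v q.1 q.2) (lsc_neg_on hlsc) (continuous_fst.prodMk continuous_snd.snd) hmaps2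
    · apply ContinuousOn.upperSemicontinuousOn
      apply ContinuousOn.sub
      apply ContinuousOn.sub
      · exact (((Real.continuous_exp.comp (continuous_const.mul continuous_fst)).mul
          ((continuous_snd.fst.sub continuous_snd.snd).pow 2)).div_const (2 * ε)).neg.continuousOn
      · exact ContinuousOn.div continuousOn_const
          (continuous_const.sub continuous_fst).continuousOn
          (fun p hp => (sub_pos.2 (lt_of_le_of_lt hp.1.2 ht1T)).ne')
      · exact ((continuous_const.mul (continuous_snd.fst.pow 2)).div_const 2).continuousOn
  obtain ⟨p, hpK, hpmax⟩ := usc_exists_max hKcomp ⟨(tb, xb, xb), hpbar⟩ huscK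
  obtain ⟨ts, xs, ys⟩ := p
  have hpPhi : M / 3 < Phi u v T K ε η α ts xs ys := by
    have h1 : g (tb, xb, xb) ≤ g (ts, xs, ys) := hpmax _ hpbar
    rw [hgeq, hgeq] at h1
    exact lt_of_lt_of_le hc h1
  have htsT : ts < T := lt_of_le_of_lt hpK.1.2 ht1T
  -- positivity of the maximizing time
  have htspos : 0 < ts := by
    rcases (hpK.1.1 : (0:ℝ) ≤ ts).lt_or_eq with h | h
    · exact h
    · exfalso
      have hP0 : M / 3 < Phi u v T K ε η α 0 xs ys := by rw [h]; exact hpPhi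
      have hval : Phi u v T K ε η α 0 xs ys =
          u 0 xs - v 0 ys - (xs - ys) ^ 2 / (2 * ε) - η / T - α * xs ^ 2 / 2 := by
        rw [Phi_def]; norm_num
      rw [hval] at hP0
      have h1 := (hord xs).1
      have h2 := (hord ys).2
      have hl : u0 xs - u0 ys ≤ (L : ℝ) * |xs - ys| := by
        have hd := hlip.dist_le_mul xs ys
        rw [Real.dist_eq, Real.dist_eq] at hd
        calc u0 xs - u0 ys ≤ |u0 xs - u0 ys| := le_abs_self _
          _ ≤ (L : ℝ) * |xs - ys| := hd
      have hAM : (L : ℝ) * |xs - ys| - (xs - ys) ^ 2 / (2 * ε) ≤ ε * (L : ℝ) ^ 2 / 2 := by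
        have h5 : ((L : ℝ) * |xs - ys| - ε * (L : ℝ) ^ 2 / 2) * (2 * ε) ≤ (xs - ys) ^ 2 := by
          nlinarith [sq_nonneg (|xs - ys| - ε * (L : ℝ)), sq_abs (xs - ys)]
        have h6 : (L : ℝ) * |xs - ys| - ε * (L : ℝ) ^ 2 / 2 ≤ (xs - ys) ^ 2 / (2 * ε) :=
          (le_div_iff₀ (by positivity : (0:ℝ) < 2 * ε)).2 h5
        linarith
      have hηT : 0 < η / T := div_pos hη hT
      have hα3 : 0 ≤ α * xs ^ 2 / 2 := by positivity
      linarith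
  obtain ⟨-, hx2, hxy2⟩ := hbound ts xs ys htspos.le htsT hpPhi
  refine ⟨ts, xs, ys, htspos, htsT, ?_, hpPhi, ?_, ?_⟩
  · intro t' x' y' ht' ht'T
    show Phi u v T K ε η α t' x' y' ≤ Phi u v T K ε η α ts xs ys
    rcases le_or_gt (Phi u v T K ε η α t' x' y') (M / 3) with h | h
    · linarith
    · have hmemp := hmem t' x' y' ht'.le ht'T h
      have h1 := hpmax (t', x', y') hmemp
      rw [hgeq, hgeq] at h1
      exact h1
  · have h1 : |xs - ys| ≤ Real.sqrt (2 * ε * C) := by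
      rw [← Real.sqrt_sq_eq_abs]; exact Real.sqrt_le_sqrt hxy2
    have h2 : Real.sqrt (2 * ε * C) = Real.sqrt (2 * C) * Real.sqrt ε := by
      rw [show 2 * ε * C = 2 * C * ε by ring, Real.sqrt_mul (by positivity) ε]
    have h3 : Real.sqrt (2 * C) * Real.sqrt ε ≤ (Real.sqrt (2 * C) + 1) * Real.sqrt ε :=
      mul_le_mul_of_nonneg_right (by linarith) (Real.sqrt_nonneg ε)
    calc |xs - ys| ≤ Real.sqrt (2 * ε * C) := h1
      _ = Real.sqrt (2 * C) * Real.sqrt ε := h2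
      _ ≤ (Real.sqrt (2 * C) + 1) * Real.sqrt ε := h3
  · have h1 : (α * |xs|) ^ 2 ≤ 2 * C * α := by
      have h0 : α ^ 2 * xs ^ 2 ≤ α ^ 2 * (2 * C / α) :=
        mul_le_mul_of_nonneg_left hx2 (sq_nonneg α)
      have he : α ^ 2 * (2 * C / α) = 2 * C * α := by
        field_simp
      calc (α * |xs|) ^ 2 = α ^ 2 * xs ^ 2 := by rw [mul_pow, sq_abs]
        _ ≤ 2 * C * α := by rw [← he]; exact h0
    have h2 : α * |xs| ≤ Real.sqrt (2 * C * α) := by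
      rw [← Real.sqrt_sq (by positivity : (0:ℝ) ≤ α * |xs|)]
      exact Real.sqrt_le_sqrt h1
    have h3 : Real.sqrt (2 * C * α) = Real.sqrt (2 * C) * Real.sqrt α := by
      rw [Real.sqrt_mul (by positivity) α]
    have h4 : Real.sqrt (2 * C) * Real.sqrt α ≤ (Real.sqrt (2 * C) + 1) * Real.sqrt α :=
      mul_le_mul_of_nonneg_right (by linarith) (Real.sqrt_nonneg α)
    calc α * |xs| ≤ Real.sqrt (2 * C * α) := h2
      _ = Real.sqrt (2 * C) * Real.sqrt α := h3
      _ ≤ (Real.sqrt (2 * C) + 1) * Real.sqrt α := h4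
end

section
/- Let (b,σ) satisfy the standing assumptions. Fix T>0, K≥0, C₀>0 and γ₂,γ₃>0. For t ∈ [0,T], ε>0 and x,y ∈ ℝ set p := e^{Kt}·(x−y)/ε, T¹_ε := e^{−x}·b(e^{−x}·p, p) − e^{−y}·b(e^{−y}·p, p) and T²_ε := (1+γ₂)·‖σ‖∞²·(e^{Kt−2x}/ε)·(1−e^{x−y})². Then there exist ε₀>0 and a function ω:(0,ε₀]→[0,∞) with ω(ε)→0 as ε→0⁺ such that for all ε ∈ (0,ε₀], t ∈ [0,T] and x,y ∈ ℝ with |x−y| ≤ C₀·√ε: T¹_ε + T²_ε ≤ ((C(ε) − 2δ₂)·e^{−2x} + γ₃)·e^{Kt}·(x−y)²/ε + γ₃·ε, where C(ε) = δ₄²/(4γ₃) + (1+γ₂)·‖σ‖∞² + ω(ε). -/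
open Set Real Filter

set_option maxHeartbeats 1000000

/-- Lemma 3.4: estimate for `T_ε`.
Under the standing assumptions on `(b,σ)`, the doubling-of-variables error term
`T_ε = T¹_ε + T²_ε` is controlled by
`((C(ε) − 2δ₂) e^{−2x} + γ₃) e^{Kt} (x−y)²/ε + γ₃ ε` with
`C(ε) = δ₄²/(4γ₃) + (1+γ₂) ‖σ‖∞² + o_ε(1)`, uniformly for `|x−y| ≤ C₀ √ε`. -/
theorem estimate_T_eps (b : ℝ → ℝ → ℝ) (σ : ℝ → ℝ)
    (δ1 δ2 δ3 δ4 : ℝ) (hδ1 : 0 < δ1) (hδ2 : 0 < δ2) (hδ3 : 0 < δ3) (hδ4 : 0 < δ4)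
    (Lσ : NNReal) (hσlip : LipschitzWith Lσ σ)
    (S : ℝ) (hS : IsLUB (Set.range fun p : ℝ => |σ p|) S) (hS2 : S ^ 2 < 2 * δ2)
    (hb1 : ∀ q p1 p2 : ℝ, |b q p1 - b q p2| ≤ δ1 * |p1 - p2|)
    (hb2 : ∀ p q1 q2 : ℝ, q1 ≤ q2 → δ2 * (q2 - q1) ≤ b q2 p - b q1 p)
    (hb3 : ∀ p q1 q2 : ℝ, q1 ≤ q2 → |b q1 p - b q2 p| ≤ δ3 * |q1 - q2|)
    (hb4 : ∀ p : ℝ, |b 0 p| ≤ δ4 * Real.sqrt (1 + p ^ 2))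
    (T K C0 γ2 γ3 : ℝ) (hT : 0 < T) (hK : 0 ≤ K) (hC0 : 0 < C0)
    (hγ2 : 0 < γ2) (hγ3 : 0 < γ3) :
    ∃ ε0 : ℝ, 0 < ε0 ∧ ∃ ω : ℝ → ℝ,
      (∀ ε : ℝ, 0 < ε → ε ≤ ε0 → 0 ≤ ω ε) ∧
      Filter.Tendsto ω (nhdsWithin 0 (Set.Ioi 0)) (nhds 0) ∧
      ∀ ε t x y : ℝ, 0 < ε → ε ≤ ε0 → 0 ≤ t → t ≤ T →
        |x - y| ≤ C0 * Real.sqrt ε →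
        ∀ p : ℝ, p = Real.exp (K * t) * (x - y) / ε →
          Real.exp (-x) * b (Real.exp (-x) * p) p - Real.exp (-y) * b (Real.exp (-y) * p) p +
              (1 + γ2) * S ^ 2 * (Real.exp (K * t - 2 * x) / ε) *
                (1 - Real.exp (x - y)) ^ 2 ≤
            ((δ4 ^ 2 / (4 * γ3) + (1 + γ2) * S ^ 2 + ω ε - 2 * δ2) * Real.exp (-2 * x) + γ3) *
                Real.exp (K * t) * (x - y) ^ 2 / ε +
              γ3 * ε := by
  have hS0 : 0 ≤ S := le_trans (abs_nonneg (σ 0)) (hS.1 ⟨0, rfl⟩)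
  have hκ0 : 0 ≤ δ4 ^ 2 / (4 * γ3) := div_nonneg (by positivity) (by linarith)
  have hγ2S : 0 ≤ (1 + γ2) * S ^ 2 := mul_nonneg (by linarith) (sq_nonneg S)
  have hM0 : 0 ≤ 4 * δ2 + 3 * (δ4 ^ 2 / (4 * γ3)) + 3 * ((1 + γ2) * S ^ 2) := by linarith
  refine ⟨1 / (4 * C0 ^ 2), by positivity,
    fun ε => (4 * δ2 + 3 * (δ4 ^ 2 / (4 * γ3)) + 3 * ((1 + γ2) * S ^ 2)) * (C0 * Real.sqrt ε),
    fun ε hε _ => mul_nonneg hM0 (by positivity), ?_, ?_⟩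
  · have h0 : Tendsto (fun ε : ℝ => Real.sqrt ε) (nhdsWithin (0 : ℝ) (Set.Ioi 0)) (nhds 0) := by
      have h := (Real.continuous_sqrt.tendsto 0).mono_left
        (nhdsWithin_le_nhds (s := Set.Ioi (0 : ℝ)))
      simpa using h
    have h1 := ((h0.const_mul C0).const_mul
      (4 * δ2 + 3 * (δ4 ^ 2 / (4 * γ3)) + 3 * ((1 + γ2) * S ^ 2)))
    simpa using h1
  · intro ε t x y hε hεε0 ht0 htT hxy p hp
    beta_reduce
    have he : (0 : ℝ) < Real.exp (K * t) := Real.exp_pos _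
    have he1 : (1 : ℝ) ≤ Real.exp (K * t) := Real.one_le_exp (mul_nonneg hK ht0)
    have hKx : Real.exp (K * t - 2 * x) = Real.exp (K * t) * Real.exp (-x) ^ 2 := by
      rw [show K * t - 2 * x = K * t + -x + -x by ring, Real.exp_add, Real.exp_add]; ring
    have h2x : Real.exp (-2 * x) = Real.exp (-x) ^ 2 := by
      rw [show (-2 : ℝ) * x = -x + -x by ring, Real.exp_add]; ring
    have hcer : Real.exp (-y) = Real.exp (-x) * Real.exp (x - y) := by
      rw [← Real.exp_add]; congr 1; ring
    rw [hKx, h2x, hcer]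
    set s := C0 * Real.sqrt ε with hs_def
    set r := x - y with hr_def
    set a := Real.exp (-x) with ha_def
    set er := Real.exp r with her_def
    set e := Real.exp (K * t) with he_def
    have ha : 0 < a := by rw [ha_def]; exact Real.exp_pos _
    have her0 : 0 < er := by rw [her_def]; exact Real.exp_pos _
    have hs0 : 0 ≤ s := by rw [hs_def]; positivity
    have hs2 : s ≤ 1 / 2 := by
      rw [hs_def]
      have h1 : Real.sqrt ε ≤ Real.sqrt (1 / (4 * C0 ^ 2)) := Real.sqrt_le_sqrt hεε0
      have h2 : Real.sqrt (1 / (4 * C0 ^ 2)) = 1 / (2 * C0) := by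
        rw [show (1 : ℝ) / (4 * C0 ^ 2) = (1 / (2 * C0)) ^ 2 by field_simp; ring]
        exact Real.sqrt_sq (by positivity)
      rw [h2] at h1
      calc C0 * Real.sqrt ε ≤ C0 * (1 / (2 * C0)) :=
            mul_le_mul_of_nonneg_left h1 hC0.le
        _ = 1 / 2 := by field_simp
    have hrs : |r| ≤ s := hxy
    have hr_le : r ≤ s := le_trans (le_abs_self r) hrs
    have hr_ge : -s ≤ r := by
      have h := abs_le.mp hrs; linarith only [h.1]
    have hr2 : r ^ 2 ≤ s ^ 2 := sq_le_sq' (by linarith only [hr_ge]) hr_le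
    -- the exponential estimates (all derived *before* hiding the definitions)
    have habs1 : |er - 1 - r| ≤ r ^ 2 := by
      rw [her_def]; exact Real.abs_exp_sub_one_sub_id_le (by linarith only [hrs, hs2])
    have habs2' : |Real.exp (2 * r) - 1 - 2 * r| ≤ (2 * r) ^ 2 :=
      Real.abs_exp_sub_one_sub_id_le
        (by rw [abs_mul, abs_two]; linarith only [hrs, hs2])
    have h2r : Real.exp (2 * r) = er ^ 2 := by
      rw [her_def, show (2 : ℝ) * r = r + r by ring, Real.exp_add, sq]
    rw [h2r] at habs2'
    clear_value s r a er e
    have hv := abs_le.mp habs2'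
    have hu := abs_le.mp habs1
    have hq : p * r = e * r ^ 2 / ε := by rw [hp]; ring
    have hpr0 : 0 ≤ p * r := by
      rw [hq]; exact div_nonneg (mul_nonneg he.le (sq_nonneg r)) hε.le
    have hpsign : p = e / ε * r := by rw [hp]; ring
    have hEpos : (0 : ℝ) < e / ε := div_pos he hε
    have hss : s ^ 2 ≤ s := by nlinarith only [hs0, hs2]
    have hru : r * (er - 1 - r) ≤ s * r ^ 2 := by
      rcases le_or_gt 0 r with h | h
      · linarith only [mul_le_mul_of_nonneg_left hu.2 h,
          mul_le_mul_of_nonneg_right hr_le (sq_nonneg r)]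
      · linarith only [mul_le_mul_of_nonpos_left hu.1 h.le,
          mul_le_mul_of_nonneg_right (show -r ≤ s by linarith only [hr_ge]) (sq_nonneg r)]
    have husq : (er - 1 - r) ^ 2 ≤ r ^ 2 * r ^ 2 := by
      nlinarith only [mul_nonneg
        (by linarith only [hu.2] : (0:ℝ) ≤ r ^ 2 - (er - 1 - r))
        (by linarith only [hu.1] : (0:ℝ) ≤ r ^ 2 + (er - 1 - r))]
    have hEr : (1 - er) ^ 2 ≤ (1 + 3 * s) * r ^ 2 := by
      nlinarith only [hru, husq, mul_le_mul_of_nonneg_right hr2 (sq_nonneg r),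
        mul_nonneg (by linarith only [hss] : (0:ℝ) ≤ s - s ^ 2) (sq_nonneg r)]
    have key2 : (2 - 4 * s) * (p * r) ≤ (er ^ 2 - 1) * p := by
      rcases le_or_gt 0 r with h | h
      · have hp0 : 0 ≤ p := by rw [hpsign]; exact mul_nonneg hEpos.le h
        linarith only [mul_le_mul_of_nonneg_right hv.1 hp0,
          mul_nonneg (mul_nonneg hp0 h) (show (0:ℝ) ≤ s - r by linarith only [hr_le])]
      · have hp0 : p ≤ 0 := by
          rw [hpsign]; exact mul_nonpos_of_nonneg_of_nonpos hEpos.le h.le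
        linarith only [mul_le_mul_of_nonpos_right hv.2 hp0,
          mul_nonneg hpr0 (show (0:ℝ) ≤ r + s by linarith only [hr_ge])]
    -- Step 1: monotonicity of b in its first variable, used twice
    have h1 : a * b (a * p) p - a * b (a * er * p) p ≤ -(δ2 * (a * ((a * er - a) * p))) := by
      have hsign : 0 ≤ (a * er - a) * p := by
        rcases le_or_gt 0 r with h | h
        · have her1 : 1 ≤ er := by rw [her_def]; exact Real.one_le_exp h
          have hp0 : 0 ≤ p := by rw [hpsign]; exact mul_nonneg hEpos.le h
          linarith only [mul_nonneg (mul_nonneg ha.le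
            (by linarith only [her1] : (0:ℝ) ≤ er - 1)) hp0]
        · have her1 : er ≤ 1 := by rw [her_def]; exact Real.exp_le_one_iff.mpr h.le
          have hp0 : p ≤ 0 := by
            rw [hpsign]; exact mul_nonpos_of_nonneg_of_nonpos hEpos.le h.le
          linarith only [mul_nonneg (mul_nonneg ha.le
            (by linarith only [her1] : (0:ℝ) ≤ 1 - er))
            (by linarith only [hp0] : (0:ℝ) ≤ -p)]
      have hmono := hb2 p (a * p) (a * er * p) (by linarith only [hsign])
      linarith only [mul_le_mul_of_nonneg_left hmono ha.le]
    have h2 : (a - a * er) * (b (a * er * p) p - b 0 p) ≤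
        δ2 * ((a - a * er) * (a * er * p)) := by
      rcases le_or_gt 0 r with h | h
      · have her1 : 1 ≤ er := by rw [her_def]; exact Real.one_le_exp h
        have hp0 : 0 ≤ p := by rw [hpsign]; exact mul_nonneg hEpos.le h
        have hcp0 : 0 ≤ a * er * p := mul_nonneg (mul_nonneg ha.le her0.le) hp0
        have hbb := hb2 p 0 (a * er * p) hcp0
        have hac : a - a * er ≤ 0 := by
          linarith only [mul_nonneg ha.le (by linarith only [her1] : (0:ℝ) ≤ er - 1)]
        linarith only [mul_le_mul_of_nonpos_left hbb hac]
      · have her1 : er ≤ 1 := by rw [her_def]; exact Real.exp_le_one_iff.mpr h.le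
        have hp0 : p ≤ 0 := by
          rw [hpsign]; exact mul_nonpos_of_nonneg_of_nonpos hEpos.le h.le
        have hcp0 : a * er * p ≤ 0 :=
          mul_nonpos_of_nonneg_of_nonpos (mul_nonneg ha.le her0.le) hp0
        have hbb := hb2 p (a * er * p) 0 hcp0
        have hac : 0 ≤ a - a * er := by
          linarith only [mul_nonneg ha.le (by linarith only [her1] : (0:ℝ) ≤ 1 - er)]
        linarith only [mul_le_mul_of_nonneg_left
          (show b (a * er * p) p - b 0 p ≤ δ2 * (a * er * p) by linarith only [hbb]) hac]
    have S1 : a * b (a * p) p - a * er * b (a * er * p) p ≤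
        -(δ2 * ((a + a * er) * ((a * er - a) * p))) + (a - a * er) * b 0 p := by
      linarith only [h1, h2]
    have S2 : -(δ2 * ((a + a * er) * ((a * er - a) * p))) ≤
        δ2 * (-2 + 4 * s) * (a ^ 2 * (p * r)) := by
      linarith only [mul_le_mul_of_nonneg_left key2 (mul_nonneg hδ2.le (sq_nonneg a))]
    -- Step 2: Young's inequality for the (a - c)·b(0,p) term
    have hrE : r ^ 2 * (e / ε) = p * r := by rw [hp]; ring
    set w := Real.sqrt (1 + p ^ 2) with hw_def
    have hw0 : 0 ≤ w := by rw [hw_def]; exact Real.sqrt_nonneg _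
    have hw2 : w ^ 2 = 1 + p ^ 2 := by rw [hw_def]; exact Real.sq_sqrt (by positivity)
    have hb0 : |b 0 p| ≤ δ4 * w := by rw [hw_def]; exact hb4 p
    clear_value w
    have young : δ4 * (|a - a * er| * (e / ε)) * w ≤
        δ4 ^ 2 / (4 * γ3) * (|a - a * er| * (e / ε)) ^ 2 + γ3 * w ^ 2 := by
      have hkey : δ4 ^ 2 / (4 * γ3) * (|a - a * er| * (e / ε)) ^ 2 + γ3 * w ^ 2 -
          δ4 * (|a - a * er| * (e / ε)) * w =
          (δ4 * (|a - a * er| * (e / ε)) - 2 * γ3 * w) ^ 2 / (4 * γ3) := by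
        field_simp
        ring
      linarith only [div_nonneg (sq_nonneg (δ4 * (|a - a * er| * (e / ε)) - 2 * γ3 * w))
        (show (0:ℝ) ≤ 4 * γ3 by linarith only [hγ3]), hkey]
    have hinv : (e / ε) * (ε / e) = 1 := by field_simp
    have hinv2 : (e / ε) ^ 2 * (ε / e) = e / ε := by field_simp
    have hiE0 : (0 : ℝ) ≤ ε / e := (div_pos hε he).le
    have hscaled := mul_le_mul_of_nonneg_right young hiE0
    have e1 : δ4 * (|a - a * er| * (e / ε)) * w * (ε / e) = δ4 * |a - a * er| * w := by
      rw [show δ4 * (|a - a * er| * (e / ε)) * w * (ε / e)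
          = δ4 * |a - a * er| * w * ((e / ε) * (ε / e)) by ring, hinv, mul_one]
    have e2 : (δ4 ^ 2 / (4 * γ3) * (|a - a * er| * (e / ε)) ^ 2 + γ3 * w ^ 2) * (ε / e)
        = δ4 ^ 2 / (4 * γ3) * ((a - a * er) ^ 2 * (e / ε)) + γ3 * (w ^ 2 * (ε / e)) := by
      rw [show (δ4 ^ 2 / (4 * γ3) * (|a - a * er| * (e / ε)) ^ 2 + γ3 * w ^ 2) * (ε / e)
          = δ4 ^ 2 / (4 * γ3) * (|a - a * er| ^ 2 * ((e / ε) ^ 2 * (ε / e)))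
            + γ3 * (w ^ 2 * (ε / e)) by ring, hinv2, sq_abs]
    rw [e1, e2] at hscaled
    have hacsq : (a - a * er) ^ 2 ≤ (1 + 3 * s) * (a ^ 2 * r ^ 2) := by
      linarith only [mul_le_mul_of_nonneg_left hEr (sq_nonneg a)]
    have h3a : (a - a * er) ^ 2 * (e / ε) ≤ (1 + 3 * s) * (a ^ 2 * (p * r)) := by
      rw [← hrE]
      linarith only [mul_le_mul_of_nonneg_right hacsq hEpos.le]
    have hpiE : p ^ 2 * (ε / e) = p * r := by
      rw [hp]; field_simp
    have hiE_le : ε / e ≤ ε := by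
      rw [div_le_iff₀ he]
      linarith only [mul_le_mul_of_nonneg_left he1 hε.le]
    have hwterm : γ3 * (w ^ 2 * (ε / e)) ≤ γ3 * (p * r) + γ3 * ε := by
      rw [hw2]
      have hsplit : (1 + p ^ 2) * (ε / e) = ε / e + p * r := by rw [← hpiE]; ring
      rw [hsplit]
      linarith only [mul_le_mul_of_nonneg_left hiE_le hγ3.le]
    have S3 : (a - a * er) * b 0 p ≤
        δ4 ^ 2 / (4 * γ3) * ((1 + 3 * s) * (a ^ 2 * (p * r))) + γ3 * (p * r) + γ3 * ε := by
      have step1 : (a - a * er) * b 0 p ≤ δ4 * |a - a * er| * w := by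
        calc (a - a * er) * b 0 p ≤ |(a - a * er) * b 0 p| := le_abs_self _
          _ = |a - a * er| * |b 0 p| := abs_mul _ _
          _ ≤ |a - a * er| * (δ4 * w) := mul_le_mul_of_nonneg_left hb0 (abs_nonneg _)
          _ = δ4 * |a - a * er| * w := by ring
      have step2 : δ4 ^ 2 / (4 * γ3) * ((a - a * er) ^ 2 * (e / ε)) ≤
          δ4 ^ 2 / (4 * γ3) * ((1 + 3 * s) * (a ^ 2 * (p * r))) :=
        mul_le_mul_of_nonneg_left h3a hκ0
      linarith only [step1, step2, hscaled, hwterm]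
    -- Step 3: the T² term
    have S4base : e * a ^ 2 / ε * (1 - er) ^ 2 ≤ (1 + 3 * s) * (a ^ 2 * (p * r)) := by
      rw [show e * a ^ 2 / ε * (1 - er) ^ 2 = a ^ 2 * (e / ε) * (1 - er) ^ 2 by ring,
        ← hrE]
      linarith only [mul_le_mul_of_nonneg_left hEr
        (mul_nonneg (sq_nonneg a) hEpos.le)]
    have S4 : (1 + γ2) * S ^ 2 * (e * a ^ 2 / ε) * (1 - er) ^ 2 ≤
        (1 + γ2) * S ^ 2 * ((1 + 3 * s) * (a ^ 2 * (p * r))) := by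
      nlinarith only [mul_le_mul_of_nonneg_left S4base hγ2S]
    -- Conclusion
    have hRHS : ((δ4 ^ 2 / (4 * γ3) + (1 + γ2) * S ^ 2 +
          (4 * δ2 + 3 * (δ4 ^ 2 / (4 * γ3)) + 3 * ((1 + γ2) * S ^ 2)) * s - 2 * δ2) * a ^ 2 + γ3)
          * e * r ^ 2 / ε
        = ((δ4 ^ 2 / (4 * γ3) + (1 + γ2) * S ^ 2 +
          (4 * δ2 + 3 * (δ4 ^ 2 / (4 * γ3)) + 3 * ((1 + γ2) * S ^ 2)) * s - 2 * δ2) * a ^ 2 + γ3)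
          * (p * r) := by
      rw [hp]; ring
    rw [hRHS]
    linarith only [S1, S2, S3, S4]
end

section
/- There exists a C∞ function ψ:ℝ²→ℝ×ℝ² = ℝ³ such that: (i) ψ(x,θ+2π)=ψ(x,θ) for all x,θ; (ii) ψ(x,θ) = (x, cos θ, sin θ) whenever x ≤ 0; (iii) ψ(x,θ) = (0, eˣ·cos θ, eˣ·sin θ) whenever x ≥ 1; (iv) writing ψ(x,θ)=(a,b) with a∈ℝ and b∈ℝ², one has |b| ≤ e whenever x ≤ 1; and (v) there exist constants δ₀>0 and m_ψ>0 such that for all x,y,θ,σ ∈ ℝ with |ψ(x,θ)−ψ(y,σ)| ≤ δ₀ and |θ−σ| ≤ π/2: |ψ(x,θ)−ψ(y,σ)| ≥ m_ψ·|(x,θ)−(y,σ)| and |Dψ(x,θ)ᵀ(ψ(x,θ)−ψ(y,σ))| ≥ m_ψ·|(x,θ)−(y,σ)|, where Dψ(x,θ)ᵀ:ℝ³→ℝ² is the adjoint of the differential Dψ(x,θ):ℝ²→ℝ³. -/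
open Set Real Filter
open scoped ContDiff

/-- Euclidean norm on `ℝ²`. -/
noncomputable def norm2 (p : ℝ × ℝ) : ℝ := Real.sqrt (p.1 ^ 2 + p.2 ^ 2)

/-- Euclidean norm on `ℝ³ = ℝ × ℝ²`. -/
noncomputable def norm3 (p : ℝ × ℝ × ℝ) : ℝ := Real.sqrt (p.1 ^ 2 + p.2.1 ^ 2 + p.2.2 ^ 2)

/-- Euclidean scalar product on `ℝ³ = ℝ × ℝ²`. -/
def dot3 (a b : ℝ × ℝ × ℝ) : ℝ := a.1 * b.1 + a.2.1 * b.2.1 + a.2.2 * b.2.2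

/-- `Dψ(z)ᵀ v`: the adjoint (with respect to the Euclidean scalar products) of the
differential of `ψ` at `z`, applied to `v ∈ ℝ³`. -/
noncomputable def DpsiT (ψ : ℝ × ℝ → ℝ × ℝ × ℝ) (z : ℝ × ℝ) (v : ℝ × ℝ × ℝ) : ℝ × ℝ :=
  (dot3 (fderiv ℝ ψ z (1, 0)) v, dot3 (fderiv ℝ ψ z (0, 1)) v)

namespace InterpAux

lemma monotone_expNegInvGlue : Monotone expNegInvGlue := by
  intro x y hxy
  rcases le_or_gt x 0 with hx | hx
  · rw [expNegInvGlue.zero_of_nonpos hx]; exact expNegInvGlue.nonneg y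
  · have hy : 0 < y := hx.trans_le hxy
    unfold expNegInvGlue
    rw [if_neg (not_le.2 hx), if_neg (not_le.2 hy)]
    apply Real.exp_le_exp.2
    have : y⁻¹ ≤ x⁻¹ := inv_anti₀ hx hxy
    linarith

lemma monotone_smoothTransition : Monotone Real.smoothTransition := by
  intro x y hxy
  unfold Real.smoothTransition
  rw [div_le_div_iff₀ (Real.smoothTransition.pos_denom x) (Real.smoothTransition.pos_denom y)]
  have h1 : expNegInvGlue x ≤ expNegInvGlue y := monotone_expNegInvGlue hxy
  have h2 : expNegInvGlue (1 - y) ≤ expNegInvGlue (1 - x) :=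
    monotone_expNegInvGlue (by linarith)
  nlinarith [expNegInvGlue.nonneg x, expNegInvGlue.nonneg y,
    expNegInvGlue.nonneg (1 - x), expNegInvGlue.nonneg (1 - y)]

noncomputable def χ : ℝ → ℝ := Real.smoothTransition
noncomputable def χ' : ℝ → ℝ := deriv Real.smoothTransition

lemma χ_contDiff : ContDiff ℝ ∞ χ := Real.smoothTransition.contDiff (n := ⊤)

lemma χ_diff : Differentiable ℝ χ :=
  χ_contDiff.differentiable (by simp)

lemma hasDerivAt_χ (x : ℝ) : HasDerivAt χ (χ' x) x := (χ_diff x).hasDerivAt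

lemma χ'_cont : Continuous χ' := χ_contDiff.continuous_deriv (by norm_num)

lemma χ'_nonneg (x : ℝ) : 0 ≤ χ' x := by
  have h := (hasDerivAt_χ x)
  rw [hasDerivAt_iff_tendsto_slope] at h
  have h' : Tendsto (slope χ x) (nhdsWithin x (Set.Ioi x)) (nhds (χ' x)) :=
    h.mono_left (nhdsWithin_mono x (fun y hy => ne_of_gt hy))
  refine ge_of_tendsto h' ?_
  filter_upwards [self_mem_nhdsWithin] with y hy
  have : χ x ≤ χ y := monotone_smoothTransition (le_of_lt hy)
  have hxy : (0:ℝ) < y - x := sub_pos.2 hy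
  rw [slope_def_field]
  exact div_nonneg (by linarith) hxy.le

lemma χ'_of_nonpos {x : ℝ} (hx : x ≤ 0) : χ' x = 0 := by
  have : IsLocalMin χ x := by
    apply IsMinOn.isLocalMin (s := Set.univ) _ (by simp)
    intro y _
    show χ x ≤ χ y
    unfold χ
    rw [Real.smoothTransition.zero_of_nonpos hx]
    exact Real.smoothTransition.nonneg y
  exact this.deriv_eq_zero

lemma χ'_of_one_le {x : ℝ} (hx : 1 ≤ x) : χ' x = 0 := by
  have : IsLocalMax χ x := by
    apply IsMaxOn.isLocalMax (s := Set.univ) _ (by simp)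
    intro y _
    show χ y ≤ χ x
    unfold χ
    rw [Real.smoothTransition.one_of_one_le hx]
    exact Real.smoothTransition.le_one y
  exact this.deriv_eq_zero

lemma χ_of_nonpos {x : ℝ} (hx : x ≤ 0) : χ x = 0 := Real.smoothTransition.zero_of_nonpos hx
lemma χ_of_one_le {x : ℝ} (hx : 1 ≤ x) : χ x = 1 := Real.smoothTransition.one_of_one_le hx
lemma χ_nonneg (x : ℝ) : 0 ≤ χ x := Real.smoothTransition.nonneg x
lemma χ_le_one (x : ℝ) : χ x ≤ 1 := Real.smoothTransition.le_one x

noncomputable def uu : ℝ → ℝ := fun x => x * χ x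
noncomputable def du : ℝ → ℝ := fun x => χ x + x * χ' x
noncomputable def ff : ℝ → ℝ := fun x => x - uu x
noncomputable def gg : ℝ → ℝ := fun x => Real.exp (uu x)
noncomputable def df : ℝ → ℝ := fun x => 1 - du x
noncomputable def dg : ℝ → ℝ := fun x => du x * Real.exp (uu x)

lemma contDiff_uu : ContDiff ℝ ∞ uu := contDiff_id.mul χ_contDiff
lemma contDiff_ff : ContDiff ℝ ∞ ff := contDiff_id.sub contDiff_uu
lemma contDiff_gg : ContDiff ℝ ∞ gg := Real.contDiff_exp.comp contDiff_uu

lemma hasDerivAt_uu (x : ℝ) : HasDerivAt uu (du x) x := by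
  have h := (hasDerivAt_id x).mul (hasDerivAt_χ x)
  exact h.congr_deriv (by simp [du])

lemma hasDerivAt_ff (x : ℝ) : HasDerivAt ff (df x) x := by
  exact (hasDerivAt_id' x).sub (hasDerivAt_uu x)

lemma hasDerivAt_gg (x : ℝ) : HasDerivAt gg (dg x) x := by
  have h := (Real.hasDerivAt_exp (uu x)).comp x (hasDerivAt_uu x)
  exact h.congr_deriv (mul_comm _ _)

lemma uu_cont : Continuous uu := continuous_id.mul (Real.smoothTransition.continuous)
lemma du_cont : Continuous du :=
  (Real.smoothTransition.continuous).add (continuous_id.mul χ'_cont)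
lemma df_cont : Continuous df := continuous_const.sub du_cont
lemma dg_cont : Continuous dg := du_cont.mul (Real.continuous_exp.comp uu_cont)

lemma uu_of_nonpos {x : ℝ} (hx : x ≤ 0) : uu x = 0 := by simp [uu, χ_of_nonpos hx]
lemma uu_of_one_le {x : ℝ} (hx : 1 ≤ x) : uu x = x := by simp [uu, χ_of_one_le hx]
lemma uu_nonneg (x : ℝ) : 0 ≤ uu x := by
  rcases le_or_gt x 0 with h | h
  · rw [uu_of_nonpos h]
  · exact mul_nonneg h.le (χ_nonneg x)
lemma uu_le_self {x : ℝ} (hx : 0 ≤ x) : uu x ≤ x := by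
  have := χ_le_one x; have := χ_nonneg x
  calc uu x = x * χ x := rfl
    _ ≤ x * 1 := by nlinarith
    _ = x := mul_one x
lemma uu_le_one {x : ℝ} (hx : x ≤ 1) : uu x ≤ 1 := by
  rcases le_or_gt x 0 with h | h
  · rw [uu_of_nonpos h]; norm_num
  · exact (uu_le_self h.le).trans hx
lemma uu_le_two {x : ℝ} (hx : x ≤ 2) : uu x ≤ 2 := by
  rcases le_or_gt x 0 with h | h
  · rw [uu_of_nonpos h]; norm_num
  · exact (uu_le_self h.le).trans hx

lemma du_of_nonpos {x : ℝ} (hx : x ≤ 0) : du x = 0 := by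
  simp [du, χ_of_nonpos hx, χ'_of_nonpos hx]
lemma du_of_one_le {x : ℝ} (hx : 1 ≤ x) : du x = 1 := by
  simp [du, χ_of_one_le hx, χ'_of_one_le hx]
lemma du_nonneg (x : ℝ) : 0 ≤ du x := by
  rcases le_or_gt x 0 with h | h
  · rw [du_of_nonpos h]
  · exact add_nonneg (χ_nonneg x) (mul_nonneg h.le (χ'_nonneg x))

/-- A uniform upper bound for `du`. -/
lemma exists_du_bound : ∃ U : ℝ, 1 ≤ U ∧ ∀ x, du x ≤ U := by
  obtain ⟨C, -, hC⟩ := (isCompact_Icc (a := (0:ℝ)) (b := 1)).exists_isMaxOn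
    (nonempty_Icc.2 zero_le_one) (du_cont.continuousOn)
  refine ⟨max (du C) 1, le_max_right _ _, fun x => ?_⟩
  rcases le_or_gt x 0 with h | h
  · rw [du_of_nonpos h]; positivity
  rcases le_or_gt 1 x with h1 | h1
  · rw [du_of_one_le h1]; exact le_max_right _ _
  · exact (hC ⟨h.le, h1.le⟩).trans (le_max_left _ _)

lemma gg_ge_one (x : ℝ) : 1 ≤ gg x := by
  simpa [gg] using Real.one_le_exp_iff.2 (uu_nonneg x)
lemma gg_pos (x : ℝ) : 0 < gg x := lt_of_lt_of_le one_pos (gg_ge_one x)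
lemma gg_le_e {x : ℝ} (hx : x ≤ 1) : gg x ≤ Real.exp 1 :=
  Real.exp_le_exp.2 (uu_le_one hx)
lemma dg_nonneg (x : ℝ) : 0 ≤ dg x := mul_nonneg (du_nonneg x) (Real.exp_pos _).le
lemma one_le_df_add_dg (x : ℝ) : 1 ≤ df x + dg x := by
  have h1 : 1 ≤ Real.exp (uu x) := Real.one_le_exp_iff.2 (uu_nonneg x)
  have h2 := du_nonneg x
  simp only [df, dg]
  nlinarith

lemma ff_of_nonpos {x : ℝ} (hx : x ≤ 0) : ff x = x := by simp [ff, uu_of_nonpos hx]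
lemma ff_of_one_le {x : ℝ} (hx : 1 ≤ x) : ff x = 0 := by simp [ff, uu_of_one_le hx]
lemma gg_of_nonpos {x : ℝ} (hx : x ≤ 0) : gg x = 1 := by simp [gg, uu_of_nonpos hx]
lemma gg_of_one_le {x : ℝ} (hx : 1 ≤ x) : gg x = Real.exp x := by simp [gg, uu_of_one_le hx]
lemma df_of_nonpos {x : ℝ} (hx : x ≤ 0) : df x = 1 := by simp [df, du_of_nonpos hx]
lemma df_of_one_le {x : ℝ} (hx : 1 ≤ x) : df x = 0 := by simp [df, du_of_one_le hx]
lemma dg_of_nonpos {x : ℝ} (hx : x ≤ 0) : dg x = 0 := by simp [dg, du_of_nonpos hx]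
lemma dg_of_one_le {x : ℝ} (hx : 1 ≤ x) : dg x = Real.exp x := by
  simp [dg, du_of_one_le hx, uu_of_one_le hx]

/-- lower Lipschitz bound for the plane curve `(ff, gg)`. -/
lemma curve_lower (x y : ℝ) :
    (x - y) ^ 2 / 2 ≤ (ff x - ff y) ^ 2 + (gg x - gg y) ^ 2 := by
  have hmono : Monotone (fun t => ff t + gg t - t) := by
    apply monotone_of_deriv_nonneg
    · intro t
      exact (((hasDerivAt_ff t).add (hasDerivAt_gg t)).sub (hasDerivAt_id' t)).differentiableAt
    · intro t
      have hd : deriv (fun t => ff t + gg t - t) t = df t + dg t - 1 :=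
        (((hasDerivAt_ff t).add (hasDerivAt_gg t)).sub (hasDerivAt_id' t)).deriv
      rw [hd]
      have := one_le_df_add_dg t
      linarith
  have key : (x - y)^2 ≤ ((ff x - ff y) + (gg x - gg y))^2 := by
    rcases le_total x y with h | h
    · have := hmono h; simp only [] at this; nlinarith
    · have := hmono h; simp only [] at this; nlinarith
  nlinarith [sq_nonneg ((ff x - ff y) - (gg x - gg y))]

section WithU

variable {U : ℝ} (hU : 1 ≤ U) (hdu : ∀ x, du x ≤ U)

noncomputable def K (U : ℝ) : ℝ := U * Real.exp 2

include hU in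
lemma K_pos : 0 < K U := by
  have := Real.exp_pos 2; unfold K; nlinarith

include hU hdu in
lemma abs_df_le_K (x : ℝ) : |df x| ≤ K U := by
  have h1 := hdu x
  have h0 := du_nonneg x
  have h2 : (1:ℝ) ≤ Real.exp 2 := by
    have := Real.add_one_le_exp (2:ℝ); linarith
  have : |df x| ≤ U := by
    rw [abs_le]; constructor <;> simp only [df] <;> nlinarith
  unfold K; nlinarith

include hdu in
lemma dg_le_U_mul_gg (x : ℝ) : dg x ≤ U * gg x := by
  have h1 := hdu x
  have h2 := (Real.exp_pos (uu x)).le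
  simp only [dg, gg]
  nlinarith

include hU hdu in
lemma abs_dg_le_K {x : ℝ} (hx : x ≤ 2) : |dg x| ≤ K U := by
  rw [abs_of_nonneg (dg_nonneg x)]
  have h1 : gg x ≤ Real.exp 2 := Real.exp_le_exp.2 (uu_le_two hx)
  have h2 := (dg_le_U_mul_gg hdu x)
  have := Real.exp_pos 2
  have := gg_pos x
  unfold K; nlinarith

end WithU

lemma half_le_Q_diag (x : ℝ) : 1/2 ≤ df x ^ 2 + dg x ^ 2 := by
  have := one_le_df_add_dg x
  nlinarith [sq_nonneg (df x - dg x)]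

section Qlow

variable {U : ℝ} (hU : 1 ≤ U) (hdu : ∀ x, du x ≤ U)

include hU hdu in
lemma Qlow {x t : ℝ} (hx2 : x ≤ 2)
    (hdf : |df x - df t| ≤ 1/(8*K U)) (hdg : |dg x - dg t| ≤ 1/(8*K U)) :
    1/4 ≤ df x * df t + dg x * dg t := by
  have h0 := half_le_Q_diag x
  have hK := K_pos hU
  have h1 := abs_df_le_K hU hdu x
  have h2 := abs_dg_le_K hU hdu hx2
  have e1 : df x * df t = df x ^ 2 + df x * (df t - df x) := by ring
  have e2 : dg x * dg t = dg x ^ 2 + dg x * (dg t - dg x) := by ring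
  have b1 : |df x * (df t - df x)| ≤ K U * (1/(8*K U)) := by
    rw [abs_mul]
    apply mul_le_mul h1 _ (abs_nonneg _) hK.le
    rwa [abs_sub_comm]
  have b2 : |dg x * (dg t - dg x)| ≤ K U * (1/(8*K U)) := by
    rw [abs_mul]
    apply mul_le_mul h2 _ (abs_nonneg _) hK.le
    rwa [abs_sub_comm]
  have hKK : K U * (1/(8*K U)) = 1/8 := by field_simp
  rw [hKK] at b1 b2
  have r1 := neg_abs_le (df x * (df t - df x))
  have r2 := neg_abs_le (dg x * (dg t - dg x))
  rw [e1, e2]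
  nlinarith

include hU hdu in
/-- Key lemma: r such that nearby points have derivative vectors with inner product ≥ 1/4 -/
lemma exists_r : ∃ r : ℝ, 0 < r ∧ r ≤ 1 ∧
    ∀ x t : ℝ, |x - t| ≤ r → 1/4 ≤ df x * df t + dg x * dg t := by
  set v : ℝ → ℝ × ℝ := fun t => (df t, dg t) with hv
  have hvc : ContinuousOn v (Icc (-1:ℝ) 2) := (df_cont.prodMk dg_cont).continuousOn
  have huc := (isCompact_Icc (a := (-1:ℝ)) (b := 2)).uniformContinuousOn_of_continuous hvc
  rw [Metric.uniformContinuousOn_iff] at huc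
  obtain ⟨δ, hδ, hd⟩ := huc (1/(8*K U)) (by have := K_pos hU; positivity)
  have use_hd : ∀ x t : ℝ, |x - t| ≤ min (δ/2) 1 →
      x ∈ Icc (-1:ℝ) 2 → t ∈ Icc (-1:ℝ) 2 → 1/4 ≤ df x * df t + dg x * dg t := by
    intro x t hxt hx ht
    have hdist : dist x t < δ := by
      rw [Real.dist_eq]
      calc |x - t| ≤ min (δ/2) 1 := hxt
        _ ≤ δ/2 := min_le_left _ _
        _ < δ := by linarith
    have := hd x hx t ht hdist
    rw [Prod.dist_eq] at this
    have hdf : |df x - df t| ≤ 1/(8*K U) := by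
      have h := (le_max_left (dist (v x).1 (v t).1) (dist (v x).2 (v t).2)).trans this.le
      simpa [v, Real.dist_eq] using h
    have hdg : |dg x - dg t| ≤ 1/(8*K U) := by
      have h := (le_max_right (dist (v x).1 (v t).1) (dist (v x).2 (v t).2)).trans this.le
      simpa [v, Real.dist_eq] using h
    exact Qlow hU hdu hx.2 hdf hdg
  refine ⟨min (δ/2) 1, lt_min (by positivity) one_pos, min_le_right _ _, ?_⟩
  intro x t hxt
  have hr1 : |x - t| ≤ 1 := hxt.trans (min_le_right _ _)
  rcases le_or_gt 1 x with h1x | h1x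
  · rcases le_or_gt 1 t with h1t | h1t
    · rw [df_of_one_le h1x, df_of_one_le h1t, dg_of_one_le h1x, dg_of_one_le h1t]
      have hx1 : (1:ℝ) ≤ Real.exp x := by
        have := Real.add_one_le_exp x; linarith
      have ht1 : (1:ℝ) ≤ Real.exp t := by
        have := Real.add_one_le_exp t; linarith
      nlinarith
    · apply use_hd x t hxt ⟨by cases abs_le.1 hr1; linarith, by cases abs_le.1 hr1; linarith⟩
        ⟨by cases abs_le.1 hr1; linarith, by linarith⟩
  · rcases le_or_gt x 0 with h0x | h0x
    · rcases le_or_gt t 0 with h0t | h0t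
      · rw [df_of_nonpos h0x, df_of_nonpos h0t, dg_of_nonpos h0x, dg_of_nonpos h0t]; norm_num
      · apply use_hd x t hxt ⟨by cases abs_le.1 hr1; linarith, by linarith⟩
          ⟨by cases abs_le.1 hr1; linarith, by cases abs_le.1 hr1; linarith⟩
    · apply use_hd x t hxt ⟨by linarith, by linarith⟩
        ⟨by cases abs_le.1 hr1; linarith, by cases abs_le.1 hr1; linarith⟩

end Qlow

noncomputable def ψ : ℝ × ℝ → ℝ × ℝ × ℝ :=
  fun p => (ff p.1, gg p.1 * Real.cos p.2, gg p.1 * Real.sin p.2)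

lemma contDiff_ψ : ContDiff ℝ ∞ ψ := by
  apply ContDiff.prodMk
  · exact contDiff_ff.comp contDiff_fst
  apply ContDiff.prodMk
  · exact (contDiff_gg.comp contDiff_fst).mul (Real.contDiff_cos.comp contDiff_snd)
  · exact (contDiff_gg.comp contDiff_fst).mul (Real.contDiff_sin.comp contDiff_snd)

lemma fderiv_ψ (x θ : ℝ) :
    fderiv ℝ ψ (x, θ) (1, 0) = (df x, dg x * Real.cos θ, dg x * Real.sin θ) ∧
    fderiv ℝ ψ (x, θ) (0, 1) = (0, -(gg x * Real.sin θ), gg x * Real.cos θ) := by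
  have hf1 : HasFDerivAt (fun p : ℝ × ℝ => ff p.1)
      ((df x) • (ContinuousLinearMap.fst ℝ ℝ ℝ)) (x, θ) :=
    by have := (hasDerivAt_ff x).comp_hasFDerivAt (f := Prod.fst) (x, θ) (hasFDerivAt_fst (𝕜 := ℝ) (E := ℝ) (F := ℝ) (p := (x, θ))); exact this
  have hg1 : HasFDerivAt (fun p : ℝ × ℝ => gg p.1)
      ((dg x) • (ContinuousLinearMap.fst ℝ ℝ ℝ)) (x, θ) :=
    by have := (hasDerivAt_gg x).comp_hasFDerivAt (f := Prod.fst) (x, θ) (hasFDerivAt_fst (𝕜 := ℝ) (E := ℝ) (F := ℝ) (p := (x, θ))); exact this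
  have hcos : HasFDerivAt (fun p : ℝ × ℝ => Real.cos p.2)
      ((-Real.sin θ) • (ContinuousLinearMap.snd ℝ ℝ ℝ)) (x, θ) :=
    by have := (Real.hasDerivAt_cos θ).comp_hasFDerivAt (f := Prod.snd) (x, θ) (hasFDerivAt_snd (𝕜 := ℝ) (E := ℝ) (F := ℝ) (p := (x, θ))); exact this
  have hsin : HasFDerivAt (fun p : ℝ × ℝ => Real.sin p.2)
      ((Real.cos θ) • (ContinuousLinearMap.snd ℝ ℝ ℝ)) (x, θ) :=
    by have := (Real.hasDerivAt_sin θ).comp_hasFDerivAt (f := Prod.snd) (x, θ) (hasFDerivAt_snd (𝕜 := ℝ) (E := ℝ) (F := ℝ) (p := (x, θ))); exact this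
  have h2 := hg1.mul hcos
  have h3 := hg1.mul hsin
  have h : HasFDerivAt ψ (((df x) • (ContinuousLinearMap.fst ℝ ℝ ℝ)).prod
      ((gg x • ((-Real.sin θ) • (ContinuousLinearMap.snd ℝ ℝ ℝ)) +
        Real.cos θ • ((dg x) • (ContinuousLinearMap.fst ℝ ℝ ℝ))).prod
       (gg x • ((Real.cos θ) • (ContinuousLinearMap.snd ℝ ℝ ℝ)) +
        Real.sin θ • ((dg x) • (ContinuousLinearMap.fst ℝ ℝ ℝ))))) (x, θ) :=
    hf1.prodMk (h2.prodMk h3)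
  rw [h.fderiv]
  constructor <;>
    simp [ContinuousLinearMap.prod_apply, ContinuousLinearMap.add_apply,
      ContinuousLinearMap.smul_apply, ContinuousLinearMap.coe_fst',
      ContinuousLinearMap.coe_snd', Prod.ext_iff, mul_comm]

/-- Jordan's inequality, absolute value version -/
lemma jordan {δ : ℝ} (h : |δ| ≤ π/2) : 2/π * |δ| ≤ |Real.sin δ| := by
  rcases le_or_gt 0 δ with h0 | h0
  · rw [abs_of_nonneg h0] at h ⊢
    have hs : 0 ≤ Real.sin δ :=
      Real.sin_nonneg_of_nonneg_of_le_pi h0 (h.trans (by linarith [Real.pi_pos]))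
    rw [abs_of_nonneg hs]
    exact Real.mul_le_sin h0 h
  · rw [abs_of_neg h0] at h ⊢
    have hs : Real.sin (-δ) = -Real.sin δ := Real.sin_neg δ
    have h0' : (0:ℝ) ≤ -δ := by linarith
    have hsn : 0 ≤ Real.sin (-δ) :=
      Real.sin_nonneg_of_nonneg_of_le_pi h0' (h.trans (by linarith [Real.pi_pos]))
    have := Real.mul_le_sin h0' h
    rw [hs] at hsn this
    rw [abs_of_nonpos (by linarith : Real.sin δ ≤ 0)]
    linarith

lemma one_sub_cos_ge {δ : ℝ} (h : |δ| ≤ π/2) : δ^2/5 ≤ 1 - Real.cos δ := by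
  have hππ : |δ| ≤ π := h.trans (by linarith [Real.pi_pos])
  have := Real.cos_le_one_sub_mul_cos_sq hππ
  have hpi : π < 3.15 := by
    have := Real.pi_lt_d2; norm_num at this ⊢; linarith
  have hpi0 := Real.pi_pos
  have h2 : δ^2/5 ≤ 2/π^2 * δ^2 := by
    rw [div_le_iff₀ (by positivity : (0:ℝ) < 5)] at *
    have hp2 : π^2 < 10 := by nlinarith
    have : 2/π^2 ≥ 1/5 := by
      rw [ge_iff_le, div_le_div_iff₀ (by norm_num) (by positivity)]
      nlinarith
    nlinarith [sq_nonneg δ]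
  linarith

lemma one_sub_cos_le_abs_sin {δ : ℝ} (h : |δ| ≤ π/2) : 1 - Real.cos δ ≤ |Real.sin δ| := by
  have hc : 0 ≤ Real.cos δ := by
    apply Real.cos_nonneg_of_mem_Icc
    constructor <;> [linarith [neg_abs_le δ]; linarith [le_abs_self δ]]
  have hc1 : Real.cos δ ≤ 1 := Real.cos_le_one δ
  have hs : Real.sin δ ^ 2 = 1 - Real.cos δ ^ 2 := Real.sin_sq δ
  have h1 : (1 - Real.cos δ)^2 ≤ |Real.sin δ|^2 := by
    rw [sq_abs, hs]; nlinarith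
  calc 1 - Real.cos δ = Real.sqrt ((1 - Real.cos δ)^2) := (Real.sqrt_sq (by linarith)).symm
    _ ≤ Real.sqrt (|Real.sin δ|^2) := Real.sqrt_le_sqrt h1
    _ = |Real.sin δ| := Real.sqrt_sq (abs_nonneg _)

/-- quantitative monotonicity along the curve -/
lemma P_bound {r : ℝ} (hr : 0 < r)
    (hQ : ∀ x t : ℝ, |x - t| ≤ r → 1/4 ≤ df x * df t + dg x * dg t)
    {a x y : ℝ} (hxy : x ≤ y) (hax : |a - x| ≤ r) (hay : |a - y| ≤ r) :
    (y - x)/4 ≤ df a * (ff y - ff x) + dg a * (gg y - gg x) := by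
  set F : ℝ → ℝ := fun t => df a * ff t + dg a * gg t - t/4 with hF
  have hdF : ∀ t, HasDerivAt F (df a * df t + dg a * dg t - 1/4) t := by
    intro t
    exact (((hasDerivAt_ff t).const_mul (df a)).add
      ((hasDerivAt_gg t).const_mul (dg a))).sub ((hasDerivAt_id' t).div_const 4)
  have hmono : MonotoneOn F (Icc x y) := by
    apply monotoneOn_of_deriv_nonneg (convex_Icc x y)
    · exact Continuous.continuousOn
        (continuous_iff_continuousAt.2 fun t => (hdF t).differentiableAt.continuousAt)
    · intro t ht
      exact (hdF t).differentiableAt.differentiableWithinAt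
    · intro t ht
      rw [interior_Icc] at ht
      rw [(hdF t).deriv]
      have hat : |a - t| ≤ r := by
        rcases abs_le.1 hax with ⟨hax1, hax2⟩
        rcases abs_le.1 hay with ⟨hay1, hay2⟩
        rw [abs_le]
        constructor <;> [linarith [ht.2]; linarith [ht.1]]
      have := hQ a t hat
      linarith
  have := hmono ⟨le_refl x, hxy⟩ ⟨hxy, le_refl y⟩ hxy
  have h2 : df a * ff x + dg a * gg x - x/4 ≤ df a * ff y + dg a * gg y - y/4 := this
  linarith

end InterpAux

set_option maxHeartbeats 1000000 in
open InterpAux in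
/-- Lemma 4.1: interpolation between logarithmic and Cartesian
coordinates. There is a smooth `2π`-periodic map `ψ : ℝ² → ℝ³` equal to `(x, e^{iθ})` for
`x ≤ 0` and to `(0, e^{x+iθ})` for `x ≥ 1`, with `|b| ≤ e` on `{x ≤ 1}`, and which is a
uniform local bi-Lipschitz embedding in the quantitative sense (v) of the paper. -/
theorem interpolation_map_exists :
    ∃ ψ : ℝ × ℝ → ℝ × ℝ × ℝ,
      ContDiff ℝ ∞ ψ ∧
      (∀ x θ : ℝ, ψ (x, θ + 2 * π) = ψ (x, θ)) ∧
      (∀ x θ : ℝ, x ≤ 0 → ψ (x, θ) = (x, Real.cos θ, Real.sin θ)) ∧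
      (∀ x θ : ℝ, 1 ≤ x → ψ (x, θ) = (0, Real.exp x * Real.cos θ, Real.exp x * Real.sin θ)) ∧
      (∀ x θ : ℝ, x ≤ 1 → norm2 (ψ (x, θ)).2 ≤ Real.exp 1) ∧
      ∃ δ0 : ℝ, 0 < δ0 ∧ ∃ mψ : ℝ, 0 < mψ ∧
        ∀ x θ y σ : ℝ,
          norm3 (ψ (x, θ) - ψ (y, σ)) ≤ δ0 → |θ - σ| ≤ π / 2 →
          mψ * norm2 ((x, θ) - (y, σ)) ≤ norm3 (ψ (x, θ) - ψ (y, σ)) ∧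
          mψ * norm2 ((x, θ) - (y, σ)) ≤ norm2 (DpsiT ψ (x, θ) (ψ (x, θ) - ψ (y, σ))) := by
  obtain ⟨U, hU, hdu⟩ := exists_du_bound
  obtain ⟨r, hr0, hr1, hQ⟩ := exists_r hU hdu
  refine ⟨InterpAux.ψ, contDiff_ψ, ?_, ?_, ?_, ?_, ?_⟩
  · intro x θ
    simp [InterpAux.ψ, Real.cos_add_two_pi, Real.sin_add_two_pi]
  · intro x θ hx
    simp [InterpAux.ψ, ff_of_nonpos hx, gg_of_nonpos hx]
  · intro x θ hx
    simp [InterpAux.ψ, ff_of_one_le hx, gg_of_one_le hx]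
  · intro x θ hx
    show Real.sqrt ((gg x * Real.cos θ)^2 + (gg x * Real.sin θ)^2) ≤ Real.exp 1
    have h1 : (gg x * Real.cos θ)^2 + (gg x * Real.sin θ)^2 = gg x ^ 2 := by
      have h2 := Real.sin_sq_add_cos_sq θ
      nlinarith only [h2]
    rw [h1, Real.sqrt_sq (gg_pos x).le]
    exact gg_le_e hx
  · have hU2 : (0:ℝ) < 4*(U+2) := by linarith
    refine ⟨r/2, by linarith, min (1/2) (1/(4*(U+2))), lt_min (by norm_num) (by positivity), ?_⟩
    set mψ : ℝ := min (1/2) (1/(4*(U+2))) with hmψ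
    have hm0 : 0 < mψ := lt_min (by norm_num) (by positivity)
    have hm12 : mψ ≤ 1/2 := min_le_left _ _
    have hm2 : mψ ≤ 1/(4*(U+2)) := min_le_right _ _
    clear_value mψ
    intro x θ y σ hclose hangle
    -- components of the difference
    have hsub : InterpAux.ψ (x, θ) - InterpAux.ψ (y, σ) =
        (ff x - ff y, gg x * Real.cos θ - gg y * Real.cos σ,
          gg x * Real.sin θ - gg y * Real.sin σ) := rfl
    set E : ℝ := (ff x - ff y)^2 + (gg x * Real.cos θ - gg y * Real.cos σ)^2 +
      (gg x * Real.sin θ - gg y * Real.sin σ)^2 with hEdef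
    have hnorm3 : norm3 (InterpAux.ψ (x, θ) - InterpAux.ψ (y, σ)) = Real.sqrt E := by
      rw [hsub]; rfl
    clear_value E
    have hE_id : E = (ff x - ff y)^2 + (gg x - gg y)^2 +
        2 * gg x * gg y * (1 - Real.cos (θ - σ)) := by
      rw [hEdef, Real.cos_sub]
      linear_combination (gg x^2) * (Real.sin_sq_add_cos_sq θ) +
        (gg y^2) * (Real.sin_sq_add_cos_sq σ)
    have hgx := gg_ge_one x
    have hgy := gg_ge_one y
    have h1c0 : 0 ≤ 1 - Real.cos (θ - σ) := by
      have := Real.cos_le_one (θ - σ); linarith only [this]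
    have hgxy : 1 ≤ gg x * gg y := by nlinarith only [hgx, hgy]
    have hcos5 := one_sub_cos_ge hangle
    have hcurve := curve_lower x y
    have step2 : (θ - σ)^2/5 ≤ gg x * gg y * (1 - Real.cos (θ - σ)) := by
      have h := mul_le_mul_of_nonneg_right hgxy h1c0
      linarith only [hcos5, h]
    have hE_lower : ((x - y)^2 + (θ - σ)^2)/4 ≤ E := by
      rw [hE_id]
      linarith only [hcurve, step2, sq_nonneg (θ - σ), sq_nonneg (x - y)]
    have hE_nonneg : 0 ≤ E := by rw [hEdef]; positivity
    -- |x - y| ≤ r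
    rw [hnorm3] at hclose
    have hE_le : E ≤ (r/2)^2 := by
      nlinarith only [Real.sq_sqrt hE_nonneg, Real.sqrt_nonneg E, hclose, hr0]
    have hxy2 : (x - y)^2 ≤ r^2 := by
      linarith only [hE_lower, hE_le, sq_nonneg (θ - σ), sq_nonneg r]
    have hxy_le : |x - y| ≤ r := by
      have h := Real.sqrt_le_sqrt hxy2
      rwa [Real.sqrt_sq_eq_abs, Real.sqrt_sq hr0.le] at h
    -- norm2 of the parameter difference
    have hΔz : ((x, θ) - (y, σ) : ℝ × ℝ) = (x - y, θ - σ) := rfl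
    set S : ℝ := (x - y)^2 + (θ - σ)^2 with hSdef
    have hnorm2 : norm2 ((x, θ) - (y, σ)) = Real.sqrt S := by rw [hΔz]; rfl
    clear_value S
    have hS_nonneg : 0 ≤ S := by rw [hSdef]; positivity
    constructor
    · -- first inequality
      rw [hnorm2, hnorm3]
      have hmsq : mψ^2 ≤ 1/4 := by nlinarith only [hm12, hm0]
      have h1 : mψ^2 * S ≤ E := by
        have h2 := mul_le_mul_of_nonneg_right hmsq hS_nonneg
        linarith only [h2, hE_lower]
      have h3 := Real.sqrt_le_sqrt h1
      rwa [Real.sqrt_mul (sq_nonneg mψ) S, Real.sqrt_sq hm0.le] at h3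
    · -- second inequality
      obtain ⟨hfd1, hfd2⟩ := fderiv_ψ x θ
      set A : ℝ := df x * (ff x - ff y) +
        dg x * ((gg x - gg y) + gg y * (1 - Real.cos (θ - σ))) with hAdef
      set B : ℝ := gg x * gg y * Real.sin (θ - σ) with hBdef
      have hDpsi : DpsiT InterpAux.ψ (x, θ) (InterpAux.ψ (x, θ) - InterpAux.ψ (y, σ))
          = (A, B) := by
        rw [hsub]
        unfold DpsiT dot3
        rw [hfd1, hfd2]
        simp only [Prod.mk.injEq]
        constructor
        · rw [hAdef, Real.cos_sub]
          linear_combination (dg x * gg x) * (Real.sin_sq_add_cos_sq θ)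
        · rw [hBdef, Real.sin_sub]
          ring
      rw [hDpsi, hnorm2]
      have hN : norm2 (A, B) = Real.sqrt (A^2 + B^2) := rfl
      rw [hN]
      have habsB : |B| = gg x * gg y * |Real.sin (θ - σ)| := by
        rw [hBdef, abs_mul, abs_mul, abs_of_nonneg (by linarith only [hgx] : (0:ℝ) ≤ gg x),
          abs_of_nonneg (by linarith only [hgy] : (0:ℝ) ≤ gg y)]
      clear_value A B
      -- |B| lower bound
      have hsinj := jordan hangle
      have hπ : π < 3.15 := by
        have := Real.pi_lt_d2; norm_num at this ⊢; linarith
      have hπ0 := Real.pi_pos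
      have hB_low : |θ - σ|/2 ≤ |B| := by
        rw [habsB]
        have h20 : (1:ℝ)/2 ≤ 2/π := by
          rw [div_le_div_iff₀ (by norm_num : (0:ℝ) < 2) hπ0]
          linarith only [hπ]
        have h1 := mul_le_mul_of_nonneg_right h20 (abs_nonneg (θ - σ))
        have h2 := mul_le_mul_of_nonneg_right hgxy (abs_nonneg (Real.sin (θ - σ)))
        linarith only [h1, h2, hsinj]
      -- T bound
      have hT0 : 0 ≤ dg x * (gg y * (1 - Real.cos (θ - σ))) :=
        mul_nonneg (dg_nonneg x) (mul_nonneg (by linarith only [hgy]) h1c0)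
      have h1cs := one_sub_cos_le_abs_sin hangle
      have hdgU := dg_le_U_mul_gg hdu x
      have hT_le : dg x * (gg y * (1 - Real.cos (θ - σ))) ≤ U * |B| := by
        rw [habsB]
        have s1 : gg y * (1 - Real.cos (θ - σ)) ≤ gg y * |Real.sin (θ - σ)| :=
          mul_le_mul_of_nonneg_left h1cs (by linarith only [hgy])
        have s2 : dg x * (gg y * (1 - Real.cos (θ - σ)))
            ≤ dg x * (gg y * |Real.sin (θ - σ)|) :=
          mul_le_mul_of_nonneg_left s1 (dg_nonneg x)
        have s3 : dg x * (gg y * |Real.sin (θ - σ)|)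
            ≤ (U * gg x) * (gg y * |Real.sin (θ - σ)|) := by
          apply mul_le_mul_of_nonneg_right hdgU
          have := abs_nonneg (Real.sin (θ - σ))
          have := gg_ge_one y
          positivity
        nlinarith only [s2, s3]
      have hUB : 0 ≤ U * |B| := mul_nonneg (by linarith only [hU]) (abs_nonneg B)
      -- |A| lower bound
      have hA_low : |x - y|/4 - U * |B| ≤ |A| := by
        rcases le_total x y with hxy | hxy
        · have hax : |x - x| ≤ r := by simp; exact hr0.le
          have hP := P_bound hr0 hQ hxy hax hxy_le
          have hA_eq : A = -(df x * (ff y - ff x) + dg x * (gg y - gg x)) +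
              dg x * (gg y * (1 - Real.cos (θ - σ))) := by rw [hAdef]; ring
          have h5 : (y - x)/4 - U * |B| ≤ -A := by
            linarith only [hA_eq, hP, hT_le]
          have hxyabs : |x - y| = y - x := by
            rw [abs_sub_comm]; exact abs_of_nonneg (by linarith only [hxy])
          rw [hxyabs]
          linarith only [h5, neg_le_abs A]
        · have hax : |x - x| ≤ r := by simp; exact hr0.le
          have hP := P_bound hr0 hQ hxy hxy_le hax
          have hA_eq : A = (df x * (ff x - ff y) + dg x * (gg x - gg y)) +
              dg x * (gg y * (1 - Real.cos (θ - σ))) := by rw [hAdef]; ring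
          have hxyabs : |x - y| = x - y := abs_of_nonneg (by linarith only [hxy])
          rw [hxyabs]
          linarith only [hP, hT0, le_abs_self A, hA_eq, hUB]
      -- combine
      have hAN : |A| ≤ Real.sqrt (A^2 + B^2) := by
        rw [← Real.sqrt_sq_eq_abs]
        exact Real.sqrt_le_sqrt (by linarith only [sq_nonneg B])
      have hBN : |B| ≤ Real.sqrt (A^2 + B^2) := by
        rw [← Real.sqrt_sq_eq_abs]
        exact Real.sqrt_le_sqrt (by linarith only [sq_nonneg A])
      have hN_low : (|x - y| + |θ - σ|)/(4*(U+2)) ≤ Real.sqrt (A^2 + B^2) := by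
        have hcomb : (|x - y| + |θ - σ|)/4 ≤ |A| + (U + 1) * |B| := by
          linarith only [hA_low, hB_low, abs_nonneg (x - y), abs_nonneg (θ - σ), abs_nonneg B]
        have hUN := mul_le_mul_of_nonneg_left hBN (by linarith only [hU] : (0:ℝ) ≤ U)
        rw [div_le_iff₀ hU2]
        linarith only [hcomb, hAN, hBN, hUN]
      have hS_le : Real.sqrt S ≤ |x - y| + |θ - σ| := by
        have h1 : S ≤ (|x - y| + |θ - σ|)^2 := by
          have h2 := mul_nonneg (abs_nonneg (x - y)) (abs_nonneg (θ - σ))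
          have h3 := sq_abs (x - y)
          have h4 := sq_abs (θ - σ)
          nlinarith only [h2, h3, h4, hSdef]
        have h5 := Real.sqrt_le_sqrt h1
        rwa [Real.sqrt_sq (by positivity)] at h5
      calc mψ * Real.sqrt S ≤ (1/(4*(U+2))) * (|x - y| + |θ - σ|) := by
            apply mul_le_mul hm2 hS_le (Real.sqrt_nonneg S) (by positivity)
        _ = (|x - y| + |θ - σ|)/(4*(U+2)) := by ring
        _ ≤ Real.sqrt (A^2 + B^2) := hN_low
end

section
/- Let ψ:ℝ²→ℝ×ℝ² be a C∞ function satisfying: ψ(x,θ+2π)=ψ(x,θ); ψ(x,θ)=(x, cos θ, sin θ) for x ≤ 0; ψ(x,θ)=(0, eˣ·cos θ, eˣ·sin θ) for x ≥ 1; and, writing ψ(x,θ)=(a,b) with b∈ℝ², |b| ≤ e whenever x ≤ 1. Let ū₀:(0,∞)→ℝ be globally Lipschitz and set u₀(x) := ū₀(eˣ). Fix T>0 and K≥0. Then there exists C₂>0, depending only on the Lipschitz constant of ū₀, the value of ū₀ at 1, K and T, such that for all ε ∈ (0,1], t ∈ [0,T] and x,y,θ,σ ∈ ℝ: |u₀(x)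 − u₀(y)| ≤ C₂ + e^{Kt}·|ψ(x,θ)−ψ(y,σ)|²/(4ε), and |θ−σ| ≤ C₂ + (1/(2ε))·(|θ−σ| − π/3)₊². -/
set_option maxHeartbeats 1000000


open Set Real Filter
open scoped ContDiff

lemma norm2_eq_abs (p : ℝ × ℝ) : norm2 p = ‖(⟨p.1, p.2⟩ : ℂ)‖ := by
  rw [Complex.norm_def, Complex.normSq_mk, norm2]
  ring_nf

lemma norm2_nonneg' (p : ℝ × ℝ) : 0 ≤ norm2 p := Real.sqrt_nonneg _

lemma abs_norm2_sub (a b : ℝ × ℝ) : |norm2 a - norm2 b| ≤ norm2 (a - b) := by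
  rw [norm2_eq_abs, norm2_eq_abs, norm2_eq_abs]
  have h : (⟨(a - b).1, (a - b).2⟩ : ℂ) = (⟨a.1, a.2⟩ : ℂ) - ⟨b.1, b.2⟩ := by
    simp [Complex.ext_iff, Prod.fst_sub, Prod.snd_sub]
  rw [h]
  exact abs_norm_sub_norm_le _ _

lemma norm2_circ (r θ : ℝ) (hr : 0 ≤ r) :
    norm2 (r * Real.cos θ, r * Real.sin θ) = r := by
  have h : (r * Real.cos θ) ^ 2 + (r * Real.sin θ) ^ 2 = r ^ 2 := by
    have := Real.sin_sq_add_cos_sq θ; nlinarith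
  rw [norm2]; simp only []
  rw [h, Real.sqrt_sq hr]

lemma norm2_snd_le_norm3 (q : ℝ × ℝ × ℝ) : norm2 q.2 ≤ norm3 q := by
  apply Real.sqrt_le_sqrt
  nlinarith [sq_nonneg q.1]

/-- Lemma 4.2: a priori estimates.
For an interpolation map `ψ` as in Lemma 4.1 and `u₀(x) = ū₀(eˣ)` with `ū₀` globally
Lipschitz, there is a constant `C₂` such that for all `ε ∈ (0,1]`, `t ∈ [0,T]` and
`x, y, θ, σ`:
`|u₀(x) − u₀(y)| ≤ C₂ + e^{Kt} |ψ(x,θ) − ψ(y,σ)|²/(4ε)` and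
`|θ − σ| ≤ C₂ + (|θ−σ| − π/3)₊²/(2ε)`. -/
theorem a_priori_estimates (ψ : ℝ × ℝ → ℝ × ℝ × ℝ)
    (hψsmooth : ContDiff ℝ ∞ ψ)
    (hψper : ∀ x θ : ℝ, ψ (x, θ + 2 * π) = ψ (x, θ))
    (hψlog : ∀ x θ : ℝ, x ≤ 0 → ψ (x, θ) = (x, Real.cos θ, Real.sin θ))
    (hψcart : ∀ x θ : ℝ, 1 ≤ x →
      ψ (x, θ) = (0, Real.exp x * Real.cos θ, Real.exp x * Real.sin θ))
    (hψbd : ∀ x θ : ℝ, x ≤ 1 → norm2 (ψ (x, θ)).2 ≤ Real.exp 1)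
    (u0bar : ℝ → ℝ) (L : NNReal) (hu0 : LipschitzOnWith L u0bar (Set.Ioi 0))
    (T K : ℝ) (hT : 0 < T) (hK : 0 ≤ K) :
    ∃ C2 : ℝ, 0 < C2 ∧
      ∀ ε t x y θ σ : ℝ, 0 < ε → ε ≤ 1 → 0 ≤ t → t ≤ T →
        |u0bar (Real.exp x) - u0bar (Real.exp y)| ≤
            C2 + Real.exp (K * t) * norm3 (ψ (x, θ) - ψ (y, σ)) ^ 2 / (4 * ε) ∧
        |θ - σ| ≤ C2 + (1 / (2 * ε)) * max (|θ - σ| - π / 3) 0 ^ 2 := by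
  have hL0 : (0:ℝ) ≤ (L : ℝ) := L.coe_nonneg
  have hexp1 : (0:ℝ) < Real.exp 1 := Real.exp_pos 1
  refine ⟨(L : ℝ) ^ 2 + 2 * (L : ℝ) * Real.exp 1 + π / 3 + 3, ?_, ?_⟩
  · have := Real.pi_pos
    nlinarith [sq_nonneg (L : ℝ), mul_nonneg hL0 hexp1.le]
  intro ε t x y θ σ hε hε1 ht0 htT
  set C2 : ℝ := (L : ℝ) ^ 2 + 2 * (L : ℝ) * Real.exp 1 + π / 3 + 3 with hC2
  set D : ℝ := norm3 (ψ (x, θ) - ψ (y, σ)) with hD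
  have hD0 : 0 ≤ D := Real.sqrt_nonneg _
  constructor
  · -- first estimate
    -- key: |exp x - exp y| ≤ 2 e + D
    have hAB : (ψ (x, θ) - ψ (y, σ)).2 = (ψ (x, θ)).2 - (ψ (y, σ)).2 := rfl
    have hsub : norm2 ((ψ (x, θ)).2 - (ψ (y, σ)).2) ≤ D := by
      have := norm2_snd_le_norm3 (ψ (x, θ) - ψ (y, σ))
      rwa [hAB] at this
    have hkey : |Real.exp x - Real.exp y| ≤ 2 * Real.exp 1 + D := by
      have htr := abs_norm2_sub (ψ (x, θ)).2 (ψ (y, σ)).2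
      rcases le_total x 1 with hx | hx <;> rcases le_total y 1 with hy | hy
      · -- both small
        have h1 : Real.exp x ≤ Real.exp 1 := Real.exp_le_exp.mpr hx
        have h2 : Real.exp y ≤ Real.exp 1 := Real.exp_le_exp.mpr hy
        rw [abs_sub_le_iff]
        constructor <;> nlinarith [Real.exp_pos x, Real.exp_pos y]
      · -- x small, y large
        have hA : norm2 (ψ (x, θ)).2 ≤ Real.exp 1 := hψbd x θ hx
        have hB : norm2 (ψ (y, σ)).2 = Real.exp y := by
          rw [hψcart y σ hy]
          exact norm2_circ _ _ (Real.exp_pos y).le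
        have h1 : Real.exp x ≤ Real.exp 1 := Real.exp_le_exp.mpr hx
        have h2 : Real.exp y - Real.exp 1 ≤ D := by
          have : norm2 (ψ (y, σ)).2 - norm2 (ψ (x, θ)).2 ≤
              norm2 ((ψ (x, θ)).2 - (ψ (y, σ)).2) := by
            have := neg_abs_le (norm2 (ψ (x, θ)).2 - norm2 (ψ (y, σ)).2)
            linarith [htr]
          linarith [hsub]
        rw [abs_sub_le_iff]
        constructor <;> nlinarith [Real.exp_pos x, Real.exp_pos y]
      · -- x large, y small
        have hB : norm2 (ψ (y, σ)).2 ≤ Real.exp 1 := hψbd y σ hy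
        have hA : norm2 (ψ (x, θ)).2 = Real.exp x := by
          rw [hψcart x θ hx]
          exact norm2_circ _ _ (Real.exp_pos x).le
        have h1 : Real.exp y ≤ Real.exp 1 := Real.exp_le_exp.mpr hy
        have h2 : Real.exp x - Real.exp 1 ≤ D := by
          have := le_abs_self (norm2 (ψ (x, θ)).2 - norm2 (ψ (y, σ)).2)
          linarith [htr, hsub]
        rw [abs_sub_le_iff]
        constructor <;> nlinarith [Real.exp_pos x, Real.exp_pos y]
      · -- both large
        have hA : norm2 (ψ (x, θ)).2 = Real.exp x := by
          rw [hψcart x θ hx]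
          exact norm2_circ _ _ (Real.exp_pos x).le
        have hB : norm2 (ψ (y, σ)).2 = Real.exp y := by
          rw [hψcart y σ hy]
          exact norm2_circ _ _ (Real.exp_pos y).le
        rw [← hA, ← hB]
        linarith [htr, hsub]
    -- Lipschitz bound
    have hlip : |u0bar (Real.exp x) - u0bar (Real.exp y)| ≤
        (L : ℝ) * |Real.exp x - Real.exp y| := by
      have := hu0.dist_le_mul (Real.exp x) (Set.mem_Ioi.mpr (Real.exp_pos x))
        (Real.exp y) (Set.mem_Ioi.mpr (Real.exp_pos y))
      rwa [Real.dist_eq, Real.dist_eq] at this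
    have hexpKt : 1 ≤ Real.exp (K * t) := Real.one_le_exp (mul_nonneg hK ht0)
    have hquad : D ^ 2 / 4 ≤ Real.exp (K * t) * D ^ 2 / (4 * ε) := by
      rw [div_le_div_iff₀ (by norm_num) (by positivity)]
      nlinarith [sq_nonneg D]
    have hAMGM : (L : ℝ) * D ≤ (L : ℝ) ^ 2 + D ^ 2 / 4 := by
      nlinarith [sq_nonneg (D / 2 - (L : ℝ))]
    have hstep : |u0bar (Real.exp x) - u0bar (Real.exp y)| ≤
        (L : ℝ) * (2 * Real.exp 1 + D) :=
      hlip.trans (mul_le_mul_of_nonneg_left hkey hL0)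
    have hpi := Real.pi_pos
    set R : ℝ := Real.exp (K * t) * D ^ 2 / (4 * ε) with hR
    clear_value R
    set u : ℝ := |u0bar (Real.exp x) - u0bar (Real.exp y)| with hu
    clear_value u
    clear_value D
    have hring : (L : ℝ) * (2 * Real.exp 1 + D) =
        2 * (L : ℝ) * Real.exp 1 + (L : ℝ) * D := by ring
    simp only [hC2]
    linarith [hstep, hquad, hAMGM, hring, sq_nonneg (L : ℝ)]
  · -- second estimate
    set m : ℝ := max (|θ - σ| - π / 3) 0 with hm
    have hm0 : 0 ≤ m := le_max_right _ _
    have hmle : |θ - σ| - π / 3 ≤ m := le_max_left _ _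
    have h2 : m ^ 2 / 2 ≤ (1 / (2 * ε)) * m ^ 2 := by
      have h12 : (1:ℝ) / 2 ≤ 1 / (2 * ε) := by
        apply one_div_le_one_div_of_le (by positivity) (by linarith)
      nlinarith [sq_nonneg m]
    have hpi := Real.pi_pos
    have hmsq : m ≤ m ^ 2 / 2 + 1 / 2 := by nlinarith [sq_nonneg (m - 1)]
    simp only [hC2]
    nlinarith [sq_nonneg (L : ℝ), mul_nonneg hL0 hexp1.le]
end
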